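/- Closed formula for iterated clockwise Hanany–Witten transitions (interpretation of the supersymmetry inequalities). Fix a separated affine type A bow diagram as above and suppose d(t,s,k) ∈ ℤ is defined for all integers t ≥ 1, s ∈ {0,...,n}, k ∈ {0,...,w} and satisfies the clockwise Hanany–Witten recursions: d(1,s,0) = v_s for all s; d(1,0,k) = v_{-k} for all k; d(1,s,k) = d(1,s,k-1) + d(1,s-1,k) - d(1,s-1,k-1) + 1 for 1 ≤ s ≤ n and 1 ≤ k ≤ w; d(t,s,0) = d(t-1,s,w) and d(t,0,k) = d(t-1,n,k) for t ≥ 2; and d(t,s,k) = s·k + d(t-1,s,w) + d(t-1,n,k) - d(t-1,n,0) for t ≥ 2, 1 ≤ s ≤ n, 1 ≤ k ≤ w. Then for all t ≥ 1, s ∈ {0,...,n} and k ∈ {0,...,w} one has d(t,s,k) = cD^t_{s,k}, i.e. d(t,s,k) = s·k + (t-1)(s·w + k·n) + ((t-1)(t-2)/2)·w·n + v_s + v_{-k} + (t-1)·v_{-w} - t·v_0. (Here d(t,s,k) is the dimension between x-point k and arrow s after moving all x-points clockwise through all arrows t-1 times and then moving x-points 1,...,k clockwise through arrows 1,...,s;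 the anticlockwise statement is the instance of this result for the reflected diagram.) -/
import Mathlib

lemma hw_tri_aux (t : ℕ) : ((t : ℤ) - 1) * ((t : ℤ) - 2) / 2 * 2 = ((t : ℤ) - 1) * ((t : ℤ) - 2) := by
  have he : Even (((t : ℤ) - 2) * (((t : ℤ) - 2) + 1)) := Int.even_mul_succ_self _
  have he' : Even (((t : ℤ) - 1) * ((t : ℤ) - 2)) := by
    have : ((t : ℤ) - 2) * (((t : ℤ) - 2) + 1) = ((t : ℤ) - 1) * ((t : ℤ) - 2) := by ring
    rwa [this] at he
  exact Int.ediv_mul_cancel he'.two_dvd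

/-- **Closed formula for iterated clockwise Hanany–Witten transitions.**
A separated affine type A bow diagram with `n ≥ 1` arrows and `w ≥ 1` x-points is encoded
by `va s = v_s` (`0 ≤ s ≤ n`) and `vx k = v_{-k}` (`0 ≤ k ≤ w`), with `vx 0 = va 0` and
`vx w = va n`.  If `d t s k` satisfies the clockwise Hanany–Witten recursions, then it is
given by the closed formula `cD^t_{s,k}`. -/
theorem hanany_witten_closed_formula
    (n w : ℕ) (hn : 1 ≤ n) (hw : 1 ≤ w)
    (va vx : ℕ → ℤ) (hvx0 : vx 0 = va 0) (hvnw : vx w = va n)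
    (d : ℕ → ℕ → ℕ → ℤ)
    (h1s0 : ∀ s ≤ n, d 1 s 0 = va s)
    (h10k : ∀ k ≤ w, d 1 0 k = vx k)
    (h1sk : ∀ s k : ℕ, 1 ≤ s → s ≤ n → 1 ≤ k → k ≤ w →
      d 1 s k = d 1 s (k - 1) + d 1 (s - 1) k - d 1 (s - 1) (k - 1) + 1)
    (hts0 : ∀ t s : ℕ, 2 ≤ t → s ≤ n → d t s 0 = d (t - 1) s w)
    (ht0k : ∀ t k : ℕ, 2 ≤ t → k ≤ w → d t 0 k = d (t - 1) n k)
    (htsk : ∀ t s k : ℕ, 2 ≤ t → 1 ≤ s → s ≤ n → 1 ≤ k → k ≤ w →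
      d t s k = (s : ℤ) * k + d (t - 1) s w + d (t - 1) n k - d (t - 1) n 0) :
    ∀ t s k : ℕ, 1 ≤ t → s ≤ n → k ≤ w →
      d t s k =
        (s : ℤ) * k + ((t : ℤ) - 1) * ((s : ℤ) * w + (k : ℤ) * n)
          + ((t : ℤ) - 1) * ((t : ℤ) - 2) / 2 * w * n
          + va s + vx k + ((t : ℤ) - 1) * vx w - (t : ℤ) * va 0 := by
  -- the `t = 1` closed form
  have base : ∀ s, s ≤ n → ∀ k, k ≤ w →
      d 1 s k = (s : ℤ) * k + va s + vx k - va 0 := by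
    intro s
    induction s with
    | zero =>
      intro _ k hk
      rw [h10k k hk]
      push_cast; ring
    | succ s ih =>
      intro hs k
      induction k with
      | zero =>
        intro _
        rw [h1s0 _ hs, hvx0]
        push_cast; ring
      | succ k ihk =>
        intro hk
        rw [h1sk (s + 1) (k + 1) (by omega) hs (by omega) hk]
        simp only [Nat.add_sub_cancel]
        rw [ihk (by omega), ih (by omega) (k + 1) hk, ih (by omega) k (by omega)]
        push_cast; ring
  intro t
  induction t with
  | zero => intro s k h; omega
  | succ t ih =>
    rcases Nat.eq_zero_or_pos t with ht0 | ht1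
    · subst ht0
      intro s k _ hs hk
      rw [base s hs k hk]
      push_cast; norm_num
    · intro s k _ hs hk
      have h2 : 2 ≤ t + 1 := by omega
      have hA := hw_tri_aux t
      have hB := hw_tri_aux (t + 1)
      have hD : ((t : ℤ) + 1 - 1) * ((t : ℤ) + 1 - 2)
          = ((t : ℤ) - 1) * ((t : ℤ) - 2) + 2 * ((t : ℤ) - 1) := by ring
      have hAB : ((t : ℤ) + 1 - 1) * ((t : ℤ) + 1 - 2) / 2
          = ((t : ℤ) - 1) * ((t : ℤ) - 2) / 2 + ((t : ℤ) - 1) := by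
        push_cast at hB
        omega
      rcases Nat.eq_zero_or_pos s with hs0 | hs1
      · subst hs0
        rcases Nat.eq_zero_or_pos k with hk0 | hk1
        · subst hk0
          rw [hts0 (t + 1) 0 h2 hs, Nat.add_sub_cancel,
            ih 0 w (by omega) hs le_rfl]
          push_cast
          rw [hAB, hvx0]
          ring
        · rw [ht0k (t + 1) k h2 hk, Nat.add_sub_cancel,
            ih n k (by omega) le_rfl hk]
          push_cast
          rw [hAB, ← hvnw, ← hvx0]
          ring
      · rcases Nat.eq_zero_or_pos k with hk0 | hk1
        · subst hk0
          rw [hts0 (t + 1) s h2 hs, Nat.add_sub_cancel,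
            ih s w (by omega) hs le_rfl]
          push_cast
          rw [hAB, hvx0]
          ring
        · rw [htsk (t + 1) s k h2 hs1 hs hk1 hk, Nat.add_sub_cancel,
            ih s w (by omega) hs le_rfl, ih n k (by omega) le_rfl hk,
            ih n 0 (by omega) le_rfl (by omega)]
          push_cast
          rw [hAB, ← hvnw, ← hvx0]
          ring
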